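/- Let H = (V, A ∪ B) be an n-uniform cross-intersecting family with n ≥ 3. Then χ(H) ≤ 3. -/

import Mathlib

/-- Key coloring lemma: if there is a set `U` meeting every edge, and a subset
`P ⊆ U` such that every edge contained in `U` meets both `P` and `U \ P`, then
the 3-coloring (P ↦ 0, U\P ↦ 1, rest ↦ 2) makes every edge non-monochromatic. -/
lemma key_coloring {V : Type*} [DecidableEq V]
    (E : Finset (Finset V)) (U P : Finset V) (hPU : P ⊆ U)
    (hmeet : ∀ e ∈ E, (e ∩ U).Nonempty)
    (hin : ∀ e ∈ E, e ⊆ U → (e ∩ P).Nonempty ∧ (e \ P).Nonempty) :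
    ∃ c : V → Fin 3, ∀ e ∈ E, ∃ x ∈ e, ∃ y ∈ e, c x ≠ c y := by
  refine ⟨fun v => if v ∈ P then 0 else if v ∈ U then 1 else 2, ?_⟩
  intro e he
  by_cases hU : e ⊆ U
  · obtain ⟨⟨x, hx⟩, ⟨y, hy⟩⟩ := hin e he hU
    rw [Finset.mem_inter] at hx
    rw [Finset.mem_sdiff] at hy
    refine ⟨x, hx.1, y, hy.1, ?_⟩
    simp [hx.2, hy.2, hU hy.1]
  · obtain ⟨x, hx⟩ := hmeet e he
    rw [Finset.mem_inter] at hx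
    obtain ⟨y, hy, hyU⟩ := Finset.not_subset.mp hU
    refine ⟨x, hx.1, y, hy, ?_⟩
    have hyP : y ∉ P := fun h => hyU (hPU h)
    by_cases hxP : x ∈ P <;> simp [hxP, hx.2, hyP, hyU]

/-- An `n`-uniform cross-intersecting family with `n ≥ 3` has chromatic
number at most 3. -/
theorem stmt2 {V : Type*} [DecidableEq V]
    (A B : Finset (Finset V)) (n : ℕ) (hn : 3 ≤ n)
    (hA : A.Nonempty) (hB : B.Nonempty)
    (hcross : ∀ a ∈ A, ∀ b ∈ B, (a ∩ b).Nonempty)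
    (hunif : ∀ e ∈ A ∪ B, e.card = n) :
    ∃ c : V → Fin 3, ∀ e ∈ A ∪ B, ∃ x ∈ e, ∃ y ∈ e, c x ≠ c y := by
  by_cases hcase : ∃ a ∈ A, ∃ b ∈ B, 2 ≤ (a ∩ b).card
  · -- some pair intersects in ≥ 2 points; U = a ∪ b has ≤ 2n-2 points,
    -- split it into two pieces each of size ≤ n-1.
    obtain ⟨a, ha, b, hb, hab⟩ := hcase
    set U := a ∪ b with hUdef
    have hmeet : ∀ e ∈ A ∪ B, (e ∩ U).Nonempty := by
      intro e he
      rcases Finset.mem_union.mp he with heA | heB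
      · obtain ⟨x, hx⟩ := hcross e heA b hb
        rw [Finset.mem_inter] at hx
        exact ⟨x, Finset.mem_inter.mpr ⟨hx.1, Finset.mem_union_right _ hx.2⟩⟩
      · obtain ⟨x, hx⟩ := hcross a ha e heB
        rw [Finset.mem_inter] at hx
        exact ⟨x, Finset.mem_inter.mpr ⟨hx.2, Finset.mem_union_left _ hx.1⟩⟩
    have hca : a.card = n := hunif a (Finset.mem_union_left _ ha)
    have hcb : b.card = n := hunif b (Finset.mem_union_right _ hb)
    have hUcard : U.card + (a ∩ b).card = a.card + b.card :=
      Finset.card_union_add_card_inter a b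
    have hUle : U.card ≤ 2 * n - 2 := by omega
    have hUge : n ≤ U.card := hca ▸ Finset.card_le_card Finset.subset_union_left
    obtain ⟨P, hPU, hPcard⟩ := Finset.exists_subset_card_eq (s := U) (n := n - 1) (by omega)
    refine key_coloring (A ∪ B) U P hPU hmeet ?_
    intro e he heU
    have hce : e.card = n := hunif e he
    constructor
    · rw [Finset.nonempty_iff_ne_empty]
      intro hemp
      have hsub : e ⊆ U \ P := fun v hv => Finset.mem_sdiff.mpr
        ⟨heU hv, fun hvP => by
          have : v ∈ e ∩ P := Finset.mem_inter.mpr ⟨hv, hvP⟩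
          simp [hemp] at this⟩
      have := Finset.card_le_card hsub
      rw [Finset.card_sdiff_of_subset hPU] at this
      omega
    · rw [Finset.nonempty_iff_ne_empty]
      intro hemp
      have hsub : e ⊆ P := fun v hv => by
        by_contra hvP
        have : v ∈ e \ P := Finset.mem_sdiff.mpr ⟨hv, hvP⟩
        simp [hemp] at this
      have := Finset.card_le_card hsub
      omega
  · -- every pair intersects in exactly one point
    push_neg at hcase
    obtain ⟨a, ha⟩ := hA
    obtain ⟨b, hb⟩ := hB
    have hca : a.card = n := hunif a (Finset.mem_union_left _ ha)
    have hcb : b.card = n := hunif b (Finset.mem_union_right _ hb)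
    set U := a ∪ b with hUdef
    have hmeet : ∀ e ∈ A ∪ B, (e ∩ U).Nonempty := by
      intro e he
      rcases Finset.mem_union.mp he with heA | heB
      · obtain ⟨x, hx⟩ := hcross e heA b hb
        rw [Finset.mem_inter] at hx
        exact ⟨x, Finset.mem_inter.mpr ⟨hx.1, Finset.mem_union_right _ hx.2⟩⟩
      · obtain ⟨x, hx⟩ := hcross a ha e heB
        rw [Finset.mem_inter] at hx
        exact ⟨x, Finset.mem_inter.mpr ⟨hx.2, Finset.mem_union_left _ hx.1⟩⟩
    have habc : (a ∩ b).card = 1 := by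
      have h1 := hcase a ha b hb
      have h2 := Finset.card_pos.mpr (hcross a ha b hb)
      omega
    -- pick z ∈ a \ b, y ∈ b \ a
    have hzex : (a \ b).Nonempty := by
      rw [← Finset.card_pos]
      have := Finset.card_inter_add_card_sdiff a b
      omega
    have hyex : (b \ a).Nonempty := by
      have := Finset.card_inter_add_card_sdiff b a
      rw [Finset.inter_comm] at this
      rw [← Finset.card_pos]
      omega
    obtain ⟨z, hz⟩ := hzex
    obtain ⟨y, hy⟩ := hyex
    rw [Finset.mem_sdiff] at hz hy
    set P : Finset V := {z, y} with hPdef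
    have hPU : P ⊆ U := by
      intro v hv
      rcases Finset.mem_insert.mp hv with h | h
      · exact Finset.mem_union_left _ (h ▸ hz.1)
      · exact Finset.mem_union_right _ ((Finset.mem_singleton.mp h) ▸ hy.1)
    refine key_coloring (A ∪ B) U P hPU hmeet ?_
    intro e he heU
    have hce : e.card = n := hunif e he
    constructor
    · -- e contains z (if e ∈ A) or y (if e ∈ B)
      rcases Finset.mem_union.mp he with heA | heB
      · -- e ∩ b is a singleton, so e \ b = a \ b ∋ z
        have h1 : (e ∩ b).card = 1 := by
          have := hcase e heA b hb
          have h2 := Finset.card_pos.mpr (hcross e heA b hb)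
          omega
        have hsub : e \ b ⊆ a \ b := by
          intro v hv
          rw [Finset.mem_sdiff] at hv ⊢
          rcases Finset.mem_union.mp (heU hv.1) with h | h
          · exact ⟨h, hv.2⟩
          · exact absurd h hv.2
        have hcesd : (e ∩ b).card + (e \ b).card = e.card :=
          Finset.card_inter_add_card_sdiff e b
        have hcasd : (a ∩ b).card + (a \ b).card = a.card :=
          Finset.card_inter_add_card_sdiff a b
        have heq : e \ b = a \ b :=
          Finset.eq_of_subset_of_card_le hsub (by omega)
        have hze : z ∈ e := by
          have : z ∈ e \ b := heq ▸ Finset.mem_sdiff.mpr hz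
          exact (Finset.mem_sdiff.mp this).1
        exact ⟨z, Finset.mem_inter.mpr ⟨hze, Finset.mem_insert_self _ _⟩⟩
      · have h1 : (a ∩ e).card = 1 := by
          have := hcase a ha e heB
          have h2 := Finset.card_pos.mpr (hcross a ha e heB)
          omega
        have h1' : (e ∩ a).card = 1 := by rw [Finset.inter_comm]; exact h1
        have hsub : e \ a ⊆ b \ a := by
          intro v hv
          rw [Finset.mem_sdiff] at hv ⊢
          rcases Finset.mem_union.mp (heU hv.1) with h | h
          · exact absurd h hv.2
          · exact ⟨h, hv.2⟩
        have hcesd : (e ∩ a).card + (e \ a).card = e.card :=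
          Finset.card_inter_add_card_sdiff e a
        have hcbsd : (b ∩ a).card + (b \ a).card = b.card :=
          Finset.card_inter_add_card_sdiff b a
        have hba : (b ∩ a).card = 1 := by rw [Finset.inter_comm]; exact habc
        have heq : e \ a = b \ a :=
          Finset.eq_of_subset_of_card_le hsub (by omega)
        have hye : y ∈ e := by
          have : y ∈ e \ a := heq ▸ Finset.mem_sdiff.mpr hy
          exact (Finset.mem_sdiff.mp this).1
        refine ⟨y, Finset.mem_inter.mpr ⟨hye, ?_⟩⟩
        exact Finset.mem_insert.mpr (Or.inr (Finset.mem_singleton_self _))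
    · -- |e| = n ≥ 3 > 2 ≥ |P|
      rw [Finset.nonempty_iff_ne_empty]
      intro hemp
      have hsub : e ⊆ P := fun v hv => by
        by_contra hvP
        have : v ∈ e \ P := Finset.mem_sdiff.mpr ⟨hv, hvP⟩
        simp [hemp] at this
      have h2 : P.card ≤ 2 := Finset.card_insert_le _ _ |>.trans (by simp)
      have := Finset.card_le_card hsub
      omega
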